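/- Every n-dimensional convex body K with smooth boundary can be written as a union of n+1 subsets, each of diameter strictly smaller than the diameter of K. -/

import Mathlib

open RealInnerProductSpace

lemma aux_exists_diam {α} [MetricSpace α] {s : Set α} (hs : IsCompact s) (hne : s.Nonempty) :
    ∃ x ∈ s, ∃ y ∈ s, dist x y = Metric.diam s := by
  obtain ⟨⟨x, y⟩, hmem, hmax⟩ := (hs.prod hs).exists_isMaxOn (hne.prod hne)
    (continuous_dist.continuousOn (s := s ×ˢ s))
  refine ⟨x, hmem.1, y, hmem.2, le_antisymm
    (Metric.dist_le_diam_of_mem hs.isBounded hmem.1 hmem.2) ?_⟩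
  exact Metric.diam_le_of_forall_dist_le dist_nonneg fun a ha b hb => hmax (Set.mk_mem_prod ha hb)

lemma aux_seg_dist {E} [NormedAddCommGroup E] [NormedSpace ℝ E] {a b q : E}
    (hq : q ∈ segment ℝ a b) (p : E) : dist p q ≤ max (dist p a) (dist p b) := by
  obtain ⟨s, t, hs, ht, hst, rfl⟩ := hq
  have hp : p = s • p + t • p := by rw [← add_smul, hst, one_smul]
  calc dist p (s • a + t • b) = ‖(s • p + t • p) - (s • a + t • b)‖ := by
        rw [dist_eq_norm, ← hp]
    _ = ‖s • (p - a) + t • (p - b)‖ := by rw [smul_sub, smul_sub]; abel_nf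
    _ ≤ s * ‖p - a‖ + t * ‖p - b‖ := by
        refine (norm_add_le _ _).trans ?_
        rw [norm_smul, norm_smul, Real.norm_eq_abs, Real.norm_eq_abs, abs_of_nonneg hs,
          abs_of_nonneg ht]
    _ ≤ s * max ‖p - a‖ ‖p - b‖ + t * max ‖p - a‖ ‖p - b‖ := by
        gcongr
        exacts [le_max_left _ _, le_max_right _ _]
    _ = max (dist p a) (dist p b) := by
        rw [← add_mul, hst, one_mul, dist_eq_norm, dist_eq_norm]

lemma aux_key {E} [NormedAddCommGroup E] [InnerProductSpace ℝ E] {K : Set E}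
    (hbd : Bornology.IsBounded K) {x y : E} (hx : x ∈ K)
    (hd : dist x y = Metric.diam K) : ∀ z ∈ K, ⟪z, y - x⟫ ≤ ⟪y, y - x⟫ := by
  intro z hz
  by_contra h
  push_neg at h
  have hI : 0 < ⟪y - x, z - y⟫ := by
    have h2 := sub_pos.2 h
    rw [← inner_sub_left] at h2
    rwa [real_inner_comm]
  have hsq : ‖y - x‖ ^ 2 < ‖z - x‖ ^ 2 := by
    have hzx : z - x = (y - x) + (z - y) := by abel
    rw [hzx, norm_add_sq_real]
    nlinarith [sq_nonneg ‖z - y‖]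
  have hlt : ‖y - x‖ < ‖z - x‖ := lt_of_pow_lt_pow_left₀ 2 (norm_nonneg _) hsq
  have h1 : dist z x ≤ Metric.diam K := Metric.dist_le_diam_of_mem hbd hz hx
  rw [dist_eq_norm] at h1
  rw [dist_eq_norm] at hd
  have h3 : ‖x - y‖ = ‖y - x‖ := norm_sub_rev x y
  rw [← hd, h3] at h1
  linarith

lemma aux_sphere_cover (n : ℕ) (hn : 0 < n) :
    ∃ (v : Fin (n + 1) → EuclideanSpace ℝ (Fin n)) (δ : ℝ), 0 < δ ∧
      ∀ u : EuclideanSpace ℝ (Fin n), ‖u‖ = 1 → ∃ i, δ ≤ ⟪u, v i⟫ := by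
  classical
  set E := EuclideanSpace ℝ (Fin n)
  set v : Fin (n + 1) → E := fun i =>
    if h : (i : ℕ) < n then EuclideanSpace.single ⟨i, h⟩ (1 : ℝ)
    else -(∑ j : Fin n, EuclideanSpace.single j (1 : ℝ)) with hv
  set f : E → ℝ := fun u => ∑ i : Fin (n + 1), max ⟪u, v i⟫ 0 with hf
  have hfc : Continuous f := by
    apply continuous_finset_sum
    intro i _
    exact (continuous_id.inner continuous_const).max continuous_const
  have hsingle : ∀ (u : E) (j : Fin n), ⟪u, EuclideanSpace.single j (1:ℝ)⟫ = u j := by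
    intro u j
    rw [EuclideanSpace.inner_single_right]
    simp
  have hfpos : ∀ u : E, ‖u‖ = 1 → 0 < f u := by
    intro u hu
    rcases lt_or_ge 0 (f u) with h | h
    · exact h
    exfalso
    have hnn : ∀ i ∈ Finset.univ, (0:ℝ) ≤ max ⟪u, v i⟫ 0 := fun i _ => le_max_right _ _
    have hzero : ∀ i : Fin (n+1), max ⟪u, v i⟫ 0 = 0 := fun i =>
      (Finset.sum_eq_zero_iff_of_nonneg hnn).1 (le_antisymm h (Finset.sum_nonneg hnn)) i
        (Finset.mem_univ i)
    have hle : ∀ i : Fin (n+1), ⟪u, v i⟫ ≤ 0 := fun i =>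
      le_of_max_le_left (hzero i).le
    have hcoord : ∀ j : Fin n, u j ≤ 0 := by
      intro j
      have h1 := hle ⟨j, j.2.trans (Nat.lt_succ_self n)⟩
      have hj : ((⟨(j:ℕ), j.2.trans (Nat.lt_succ_self n)⟩ : Fin (n+1)) : ℕ) < n := j.2
      rw [hv] at h1
      simp only [dif_pos hj] at h1
      rw [hsingle] at h1
      exact h1
    have hsum : 0 ≤ ∑ j : Fin n, u j := by
      have h1 := hle (Fin.last n)
      rw [hv] at h1
      have hlast : ¬ ((Fin.last n : ℕ) < n) := by simp
      simp only [dif_neg hlast] at h1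
      rw [inner_neg_right, inner_sum] at h1
      simp_rw [hsingle] at h1
      linarith
    have hz : ∀ j : Fin n, u j = 0 := by
      intro j
      have hnp := Finset.sum_nonpos (fun j (_ : j ∈ Finset.univ) => hcoord j)
      have hall : ∑ j : Fin n, u j = 0 := le_antisymm hnp hsum
      exact (Finset.sum_eq_zero_iff_of_nonpos (fun j _ => hcoord j)).1 hall j (Finset.mem_univ j)
    have hu0 : u = 0 := PiLp.ext fun j => by simp [hz j]
    rw [hu0, norm_zero] at hu
    norm_num at hu
  have hsne : (Metric.sphere (0:E) 1).Nonempty := by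
    refine ⟨EuclideanSpace.single ⟨0, hn⟩ (1:ℝ), ?_⟩
    rw [mem_sphere_iff_norm, sub_zero, EuclideanSpace.norm_single]
    norm_num
  obtain ⟨u₀, hu₀s, hu₀min⟩ := (isCompact_sphere (0:E) 1).exists_isMinOn hsne hfc.continuousOn
  have hm : 0 < f u₀ := hfpos u₀ (by simpa using hu₀s)
  refine ⟨v, f u₀ / (n + 1), by positivity, ?_⟩
  intro u hu
  have hlef : f u₀ ≤ f u := hu₀min (by simpa using hu)
  by_contra hc
  push_neg at hc
  have hlt : f u < (n + 1) * (f u₀ / (n + 1)) := by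
    rw [hf]
    calc ∑ i : Fin (n+1), max ⟪u, v i⟫ 0 < ∑ _i : Fin (n+1), f u₀ / (n + 1) := by
          apply Finset.sum_lt_sum_of_nonempty Finset.univ_nonempty
          intro i _
          rw [max_lt_iff]
          exact ⟨hc i, by positivity⟩
      _ = (n + 1) * (f u₀ / (n + 1)) := by
          rw [Finset.sum_const, Finset.card_univ, Fintype.card_fin, nsmul_eq_mul]
          push_cast; ring
  rw [mul_div_cancel₀] at hlt
  · linarith
  · positivity

set_option maxHeartbeats 1600000 in
/-- Hadwiger: every n-dimensional convex body with smooth boundary (a unique outer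
unit normal at every boundary point) can be written as a union of n+1 subsets,
each of diameter strictly smaller than the diameter of the body. -/
theorem smooth_convex_body_borsuk (n : ℕ) (hn : 0 < n)
    (K : Set (EuclideanSpace ℝ (Fin n)))
    (hKc : IsCompact K) (hKconv : Convex ℝ K) (hKint : (interior K).Nonempty)
    (hsmooth : ∀ x ∈ frontier K,
      ∃! u : EuclideanSpace ℝ (Fin n), ‖u‖ = 1 ∧ ∀ y ∈ K, ⟪y, u⟫ ≤ ⟪x, u⟫) :
    ∃ X : Fin (n + 1) → Set (EuclideanSpace ℝ (Fin n)),
      K = ⋃ i, X i ∧ ∀ i, Metric.diam (X i) < Metric.diam K := by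
  classical
  obtain ⟨v, δ, hδ, hcover⟩ := aux_sphere_cover n hn
  obtain ⟨c, hc⟩ := hKint
  set d := Metric.diam K with hd
  obtain ⟨ε, hε, hball⟩ := Metric.mem_nhds_iff.1 (mem_interior_iff_mem_nhds.1 hc)
  set r := ε / 2 with hr
  have hrpos : 0 < r := by positivity
  have hcK : c ∈ K := hball (Metric.mem_ball_self hε)
  set u₀ : EuclideanSpace ℝ (Fin n) := EuclideanSpace.single ⟨0, hn⟩ (1:ℝ) with hu₀def
  have hu₀ : ‖u₀‖ = 1 := by rw [hu₀def, EuclideanSpace.norm_single]; norm_num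
  -- every point of K is at distance ≤ d - r from c
  have hfar0 : ∀ x ∈ K, x ≠ c → dist c x ≤ d - r := by
    intro x hx hxc
    set t := dist c x with htdef
    have ht : 0 < t := dist_pos.2 (Ne.symm hxc)
    set w := c + (r / t) • (c - x) with hw
    have hwc : dist w c = r := by
      rw [hw, dist_eq_norm, add_sub_cancel_left, norm_smul, Real.norm_eq_abs,
        abs_of_pos (by positivity), ← dist_eq_norm, ← htdef]
      field_simp
    have hwK : w ∈ K := hball (by rw [Metric.mem_ball, hwc]; linarith)
    have hwx : dist w x = t + r := by
      have h1 : w - x = (1 + r / t) • (c - x) := by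
        rw [hw, add_smul, one_smul]
        abel
      rw [dist_eq_norm, h1, norm_smul, Real.norm_eq_abs, abs_of_pos (by positivity),
        ← dist_eq_norm, ← htdef]
      field_simp
    have := Metric.dist_le_diam_of_mem hKc.isBounded hwK hx
    rw [hwx] at this
    rw [htdef] at *
    linarith
  have hrd : r ≤ d - r := by
    have hx0K : c + r • u₀ ∈ K := by
      apply hball
      rw [Metric.mem_ball, dist_eq_norm, add_sub_cancel_left, norm_smul,
        Real.norm_eq_abs, abs_of_pos hrpos, hu₀, mul_one]
      linarith
    have hne : c + r • u₀ ≠ c := by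
      intro h
      have : r • u₀ = 0 := by
        have := sub_eq_zero.2 h
        rwa [add_sub_cancel_left] at this
      rw [smul_eq_zero] at this
      rcases this with h' | h'
      · exact hrpos.ne' h'
      · rw [h', norm_zero] at hu₀; norm_num at hu₀
    have hdd := hfar0 _ hx0K hne
    have hdist : dist c (c + r • u₀) = r := by
      rw [dist_eq_norm]
      have h1 : c - (c + r • u₀) = -(r • u₀) := by abel
      rw [h1, norm_neg, norm_smul, Real.norm_eq_abs, abs_of_pos hrpos, hu₀, mul_one]
    rwa [hdist] at hdd
  have hdpos : 0 < d := by linarith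
  have hfar : ∀ x ∈ K, dist c x ≤ d - r := by
    intro x hx
    by_cases hxc : x = c
    · rw [hxc, dist_self]; linarith
    · exact hfar0 x hx hxc
  -- boundary pieces
  set C : Fin (n+1) → Set ((EuclideanSpace ℝ (Fin n)) × (EuclideanSpace ℝ (Fin n))) := fun i =>
    {p | p.1 ∈ frontier K ∧ ‖p.2‖ = 1 ∧ δ ≤ ⟪p.2, v i⟫ ∧ ∀ y ∈ K, ⟪y, p.2⟫ ≤ ⟪p.1, p.2⟫}
    with hC
  have hfrsub : frontier K ⊆ K := by
    rw [hKc.isClosed.frontier_eq]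
    exact Set.diff_subset
  have hfrcpt : IsCompact (frontier K) := hKc.of_isClosed_subset isClosed_frontier hfrsub
  have hCclosed : ∀ i, IsClosed (C i) := by
    intro i
    have h1 : IsClosed {p : (EuclideanSpace ℝ (Fin n)) × (EuclideanSpace ℝ (Fin n)) | p.1 ∈ frontier K} :=
      isClosed_frontier.preimage continuous_fst
    have h2 : IsClosed {p : (EuclideanSpace ℝ (Fin n)) × (EuclideanSpace ℝ (Fin n)) | ‖p.2‖ = 1} :=
      isClosed_eq (continuous_norm.comp continuous_snd) continuous_const
    have h3 : IsClosed {p : (EuclideanSpace ℝ (Fin n)) × (EuclideanSpace ℝ (Fin n)) | δ ≤ ⟪p.2, v i⟫} :=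
      isClosed_le continuous_const (continuous_snd.inner continuous_const)
    have h4 : IsClosed {p : (EuclideanSpace ℝ (Fin n)) × (EuclideanSpace ℝ (Fin n)) | ∀ y ∈ K, ⟪y, p.2⟫ ≤ ⟪p.1, p.2⟫} := by
      have heq : {p : (EuclideanSpace ℝ (Fin n)) × (EuclideanSpace ℝ (Fin n)) | ∀ y ∈ K, ⟪y, p.2⟫ ≤ ⟪p.1, p.2⟫}
          = ⋂ y ∈ K, {p : (EuclideanSpace ℝ (Fin n)) × (EuclideanSpace ℝ (Fin n)) | ⟪y, p.2⟫ ≤ ⟪p.1, p.2⟫} := by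
        ext p
        simp
      rw [heq]
      exact isClosed_biInter fun y _ =>
        isClosed_le (continuous_const.inner continuous_snd)
          (continuous_fst.inner continuous_snd)
    exact h1.inter (h2.inter (h3.inter h4))
  have hCcpt : ∀ i, IsCompact (C i) := by
    intro i
    refine IsCompact.of_isClosed_subset (hfrcpt.prod (isCompact_sphere (0:(EuclideanSpace ℝ (Fin n))) 1))
      (hCclosed i) ?_
    intro p hp
    exact ⟨hp.1, by simpa using hp.2.1⟩
  set B : Fin (n+1) → Set (EuclideanSpace ℝ (Fin n)) := fun i => Prod.fst '' C i with hB
  have hBfr : ∀ i, B i ⊆ frontier K := by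
    rintro i x ⟨p, hp, rfl⟩
    exact hp.1
  have hBK : ∀ i, B i ⊆ K := fun i => (hBfr i).trans hfrsub
  have hBcpt : ∀ i, IsCompact (B i) := fun i => (hCcpt i).image continuous_fst
  -- the frontier is covered by the B i
  have hfrB : ∀ z ∈ frontier K, ∃ i, z ∈ B i := by
    intro z hz
    obtain ⟨u, ⟨hu1, hu2⟩, _⟩ := hsmooth z hz
    obtain ⟨i, hi⟩ := hcover u hu1
    exact ⟨i, ⟨(z, u), ⟨hz, hu1, hi, hu2⟩, rfl⟩⟩
  -- each B i has diameter < d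
  have hBdiam : ∀ i, Metric.diam (B i) < d := by
    intro i
    rcases Set.eq_empty_or_nonempty (B i) with he | hne
    · rw [he, Metric.diam_empty]; exact hdpos
    obtain ⟨x, hx, y, hy, hxy⟩ := aux_exists_diam (hBcpt i) hne
    have hled : Metric.diam (B i) ≤ d := Metric.diam_mono (hBK i) hKc.isBounded
    rcases lt_or_eq_of_le hled with h | h
    · exact h
    exfalso
    have hdxy : dist x y = d := by rw [hxy, h]
    have hxyne : y - x ≠ 0 := by
      intro heq
      have : x = y := by
        have := sub_eq_zero.1 heq
        exact this.symm
      rw [this, dist_self] at hdxy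
      linarith
    have hyx : ‖y - x‖ = d := by rw [← hdxy, dist_eq_norm']
    obtain ⟨u, hudef⟩ : ∃ u : EuclideanSpace ℝ (Fin n), u = ‖y - x‖⁻¹ • (y - x) := ⟨_, rfl⟩
    have hnpos : 0 < ‖y - x‖ := norm_pos_iff.2 hxyne
    have hunorm : ‖u‖ = 1 := by
      rw [hudef, norm_smul, norm_inv, norm_norm, inv_mul_cancel₀ hnpos.ne']
    have hnormal_y : ∀ z ∈ K, ⟪z, u⟫ ≤ ⟪y, u⟫ := by
      intro z hz
      have hkey := aux_key hKc.isBounded (hBK i hx) hdxy z hz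
      rw [hudef, real_inner_smul_right, real_inner_smul_right]
      exact mul_le_mul_of_nonneg_left hkey (inv_nonneg.2 (norm_nonneg _))
    have hdyx : dist y x = d := by rw [dist_comm]; exact hdxy
    have hnormal_x : ∀ z ∈ K, ⟪z, -u⟫ ≤ ⟪x, -u⟫ := by
      intro z hz
      have hkey := aux_key hKc.isBounded (hBK i hy) hdyx z hz
      have hxy2 : x - y = -(y - x) := by abel
      rw [hudef, ← smul_neg, real_inner_smul_right, real_inner_smul_right, ← hxy2]
      exact mul_le_mul_of_nonneg_left hkey (inv_nonneg.2 (norm_nonneg _))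
    obtain ⟨⟨x', ux⟩, hxC, hxeq⟩ := hx
    obtain ⟨⟨y', uy⟩, hyC, hyeq⟩ := hy
    simp only at hxeq hyeq
    subst hxeq hyeq
    -- unique normal at y
    obtain ⟨wy, _, hwyuniq⟩ := hsmooth _ hyC.1
    have h1 : uy = wy := hwyuniq uy ⟨hyC.2.1, hyC.2.2.2⟩
    have h2 : u = wy := hwyuniq u ⟨hunorm, hnormal_y⟩
    have hδu : δ ≤ ⟪u, v i⟫ := by
      rw [h2, ← h1]
      exact hyC.2.2.1
    -- unique normal at x
    obtain ⟨wx, _, hwxuniq⟩ := hsmooth _ hxC.1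
    have h3 : ux = wx := hwxuniq ux ⟨hxC.2.1, hxC.2.2.2⟩
    have h4 : -u = wx := hwxuniq (-u) ⟨by rw [norm_neg]; exact hunorm, hnormal_x⟩
    have hδnu : δ ≤ ⟪-u, v i⟫ := by
      rw [h4, ← h3]
      exact hxC.2.2.1
    rw [inner_neg_left] at hδnu
    linarith
  -- the pieces
  set X : Fin (n+1) → Set (EuclideanSpace ℝ (Fin n)) := fun i => insert c (⋃ x ∈ B i, segment ℝ c x) with hX
  refine ⟨X, ?_, ?_⟩
  · apply Set.Subset.antisymm
    · intro y hy
      by_cases hyc : y = c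
      · subst hyc
        exact Set.mem_iUnion.2 ⟨0, Set.mem_insert _ _⟩
      have hycn : y - c ≠ 0 := sub_ne_zero.2 hyc
      have hycpos : 0 < ‖y - c‖ := norm_pos_iff.2 hycn
      set T := {t : ℝ | 0 ≤ t ∧ c + t • (y - c) ∈ K} with hT
      have hT1 : (1:ℝ) ∈ T := ⟨zero_le_one, by rw [one_smul]; simpa using hy⟩
      have hTc : IsClosed T := by
        have heq : T = Set.Ici (0:ℝ) ∩ (fun t : ℝ => c + t • (y - c)) ⁻¹' K := rfl
        rw [heq]
        exact isClosed_Ici.inter (hKc.isClosed.preimage (by continuity))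
      have hTbd : T ⊆ Set.Icc 0 (d / ‖y - c‖) := by
        rintro t ⟨ht0, htK⟩
        refine ⟨ht0, ?_⟩
        have h1 := Metric.dist_le_diam_of_mem hKc.isBounded hcK htK
        rw [dist_eq_norm] at h1
        have h2 : c - (c + t • (y - c)) = -(t • (y - c)) := by abel
        rw [h2, norm_neg, norm_smul, Real.norm_eq_abs, abs_of_nonneg ht0] at h1
        rw [le_div_iff₀ hycpos]
        exact h1
      have hTcpt : IsCompact T := IsCompact.of_isClosed_subset isCompact_Icc hTc hTbd
      set t₀ := sSup T with ht₀def
      have ht₀T : t₀ ∈ T := hTcpt.sSup_mem ⟨1, hT1⟩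
      have ht₀1 : 1 ≤ t₀ := le_csSup hTcpt.bddAbove hT1
      have ht₀pos : 0 < t₀ := lt_of_lt_of_le one_pos ht₀1
      set z := c + t₀ • (y - c) with hzdef
      have hzK : z ∈ K := ht₀T.2
      have hzfr : z ∈ frontier K := by
        rw [hKc.isClosed.frontier_eq]
        refine ⟨hzK, fun hzint => ?_⟩
        obtain ⟨ε', hε', hball'⟩ := Metric.mem_nhds_iff.1 (mem_interior_iff_mem_nhds.1 hzint)
        set s := t₀ + ε' / (2 * ‖y - c‖) with hsdef
        have hst : t₀ < s := by
          rw [hsdef]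
          have : 0 < ε' / (2 * ‖y - c‖) := by positivity
          linarith
        have hsT : s ∈ T := by
          refine ⟨by linarith [ht₀pos], hball' ?_⟩
          rw [Metric.mem_ball, dist_eq_norm]
          have h1 : c + s • (y - c) - z = (s - t₀) • (y - c) := by
            rw [hzdef, hsdef]
            module
          rw [h1, norm_smul, Real.norm_eq_abs, hsdef]
          have h2 : t₀ + ε' / (2 * ‖y - c‖) - t₀ = ε' / (2 * ‖y - c‖) := by ring
          rw [h2, abs_of_pos (by positivity)]
          rw [div_mul_eq_mul_div, mul_comm]
          rw [div_lt_iff₀ (by positivity)]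
          nlinarith
        have := le_csSup hTcpt.bddAbove hsT
        linarith
      obtain ⟨i, hiB⟩ := hfrB z hzfr
      refine Set.mem_iUnion.2 ⟨i, Set.mem_insert_iff.2 (Or.inr ?_)⟩
      refine Set.mem_biUnion hiB ?_
      refine ⟨1 - t₀⁻¹, t₀⁻¹, ?_, by positivity, by ring, ?_⟩
      · have : t₀⁻¹ ≤ 1 := by
          rw [inv_le_one_iff₀]
          right; exact ht₀1
        linarith
      · rw [hzdef]
        have hinv : t₀⁻¹ * t₀ = 1 := inv_mul_cancel₀ ht₀pos.ne'
        rw [smul_add, smul_smul, hinv]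
        rw [sub_smul, one_smul, one_smul]
        abel
    · intro y hy
      obtain ⟨i, hi⟩ := Set.mem_iUnion.1 hy
      rcases Set.mem_insert_iff.1 hi with rfl | hseg
      · exact hcK
      obtain ⟨x, hxB, hyseg⟩ := Set.mem_iUnion₂.1 hseg
      exact hKconv.segment_subset hcK (hBK i hxB) hyseg
  · intro i
    set m := max (Metric.diam (B i)) (d - r) with hm
    have hm0 : 0 ≤ m := le_max_of_le_right (by linarith)
    have hdcx : ∀ x ∈ B i, dist c x ≤ m := fun x hx =>
      le_max_of_le_right (hfar x (hBK i hx))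
    have hXle : Metric.diam (X i) ≤ m := by
      apply Metric.diam_le_of_forall_dist_le hm0
      intro p hp q hq
      have keybound : ∀ q' ∈ X i, dist c q' ≤ m := by
        intro q' hq'
        rcases Set.mem_insert_iff.1 hq' with rfl | hq''
        · rw [dist_self]; exact hm0
        obtain ⟨x, hxB, hqx⟩ := Set.mem_iUnion₂.1 hq''
        refine (aux_seg_dist hqx c).trans ?_
        rw [dist_self]
        exact max_le hm0 (hdcx x hxB)
      rcases Set.mem_insert_iff.1 hp with rfl | hp'
      · exact keybound q hq
      obtain ⟨x, hxB, hpx⟩ := Set.mem_iUnion₂.1 hp'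
      rcases Set.mem_insert_iff.1 hq with rfl | hq'
      · rw [dist_comm]
        exact keybound p (Set.mem_insert_iff.2 (Or.inr hp'))
      obtain ⟨x', hxB', hqx'⟩ := Set.mem_iUnion₂.1 hq'
      refine (aux_seg_dist hqx' p).trans (max_le ?_ ?_)
      · rw [dist_comm]
        refine (aux_seg_dist hpx c).trans ?_
        rw [dist_self]
        exact max_le hm0 (hdcx x hxB)
      · rw [dist_comm]
        refine (aux_seg_dist hpx x').trans (max_le ?_ ?_)
        · rw [dist_comm]
          exact hdcx x' hxB'
        · rw [dist_comm]
          exact le_max_of_le_left (Metric.dist_le_diam_of_mem (hBcpt i).isBounded hxB hxB')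
    exact lt_of_le_of_lt hXle (max_lt (hBdiam i) (by linarith))
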